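/- For Pair Matching, no deterministic online algorithm reading fewer than (1 − H(ε))n/2 advice bits can make fewer than εn mistakes, for any ε ∈ (0, 1/2] and large enough n. Formally: for every ε ∈ (0, 1/2], every b ∈ ℕ, and every map A : Fin (2^b) → List ℚ → ℚ → Bool, for all sufficiently large m, if b < (1 − H(ε))m then there exists a Pair Matching input of length N ≤ 2m (pairwise distinct rationals in [0,1]) such that for every advice value a ∈ Fin (2^b), the number of incorrect answers of A under advice a is at least εm (hence at least εN/2). -/

import Mathlib

/-- The binary entropy function `H(p) = −p·log₂ p − (1−p)·log₂(1−p)`. -/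
noncomputable def binEnt (p : ℝ) : ℝ :=
  -(p * Real.logb 2 p) - (1 - p) * Real.logb 2 (1 - p)

/-- The correct answer for item `i` of a Pair Matching input: `true` ('accept')
iff some other item of the input has matching value `1 − xᵢ`. -/
def pmCorrect (l : List ℚ) (i : Fin l.length) : Bool :=
  decide (∃ j : Fin l.length, j ≠ i ∧ l.get i + l.get j = 1)

lemma rpow_id (ε : ℝ) (hε0 : 0 < ε) (hε1 : ε ≤ 1/2) (m : ℕ) :
    (2:ℝ) ^ (-(binEnt ε * m)) = ε ^ (ε*m) * (1-ε) ^ ((1-ε)*m) := by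
  have h1ε : 0 < 1 - ε := by linarith
  have he : ε = (2:ℝ) ^ Real.logb 2 ε := (Real.rpow_logb two_pos (by norm_num) hε0).symm
  have he' : (1-ε) = (2:ℝ) ^ Real.logb 2 (1-ε) := (Real.rpow_logb two_pos (by norm_num) h1ε).symm
  rw [show ε ^ (ε*m) = ((2:ℝ) ^ Real.logb 2 ε) ^ (ε*m) by rw [← he],
      show (1-ε) ^ ((1-ε)*m) = ((2:ℝ) ^ Real.logb 2 (1-ε)) ^ ((1-ε)*m) by rw [← he'],
      ← Real.rpow_mul (by norm_num), ← Real.rpow_mul (by norm_num),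
      ← Real.rpow_add two_pos]
  congr 1
  simp only [binEnt]; ring

-- ε^x * (1-ε)^(m-x) = (ε/(1-ε))^x * (1-ε)^m  (rpow)
lemma factor_eq (ε : ℝ) (hε0 : 0 < ε) (h1ε : 0 < 1 - ε) (m x : ℝ) :
    ε ^ x * (1-ε) ^ ((m:ℝ) - x) = (ε/(1-ε)) ^ x * (1-ε) ^ m := by
  rw [Real.div_rpow hε0.le h1ε.le, Real.rpow_sub h1ε]
  field_simp

lemma sum_choose_le (ε : ℝ) (hε0 : 0 < ε) (hε1 : ε ≤ 1/2) (m : ℕ) :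
    (((Finset.range (m+1)).filter (fun j : ℕ => (j:ℝ) ≤ ε * m)).sum
      (fun j => ((m.choose j : ℕ) : ℝ))) ≤ (2:ℝ) ^ (binEnt ε * m) := by
  have h1ε : 0 < 1 - ε := by linarith
  have hr0 : 0 < ε/(1-ε) := div_pos hε0 h1ε
  have hr1 : ε/(1-ε) ≤ 1 := by rw [div_le_one h1ε]; linarith
  -- pointwise bound
  have key : ∀ j ∈ (Finset.range (m+1)).filter (fun j : ℕ => (j:ℝ) ≤ ε * m),
      (2:ℝ) ^ (-(binEnt ε * m)) ≤ ε ^ j * (1-ε) ^ (m - j) := by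
    intro j hj
    simp only [Finset.mem_filter, Finset.mem_range] at hj
    obtain ⟨hjm, hjε⟩ := hj
    have hjm' : j ≤ m := Nat.lt_succ_iff.mp hjm
    have e1 : ε ^ j * (1-ε) ^ (m - j) = ε ^ (j:ℝ) * (1-ε) ^ ((m:ℝ) - (j:ℝ)) := by
      rw [Real.rpow_natCast, ← Nat.cast_sub hjm', Real.rpow_natCast]
    rw [rpow_id ε hε0 hε1 m, e1,
        factor_eq ε hε0 h1ε m (j:ℝ),
        show (1-ε)*(m:ℝ) = (m:ℝ) - ε*m by ring,
        factor_eq ε hε0 h1ε m (ε*m)]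
    have := Real.rpow_le_rpow_of_exponent_ge hr0 hr1 hjε
    have hp : (0:ℝ) < (1-ε) ^ (m:ℝ) := Real.rpow_pos_of_pos h1ε _
    nlinarith [Real.rpow_pos_of_pos hr0 (ε*m)]
  -- sum bound
  have hsum : (((Finset.range (m+1)).filter (fun j : ℕ => (j:ℝ) ≤ ε * m)).sum
      (fun j => ((m.choose j : ℕ) : ℝ) * (2:ℝ) ^ (-(binEnt ε * m)))) ≤ 1 := by
    calc _ ≤ (((Finset.range (m+1)).filter (fun j : ℕ => (j:ℝ) ≤ ε * m)).sum
        (fun j => ((m.choose j : ℕ) : ℝ) * (ε ^ j * (1-ε) ^ (m - j)))) := by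
          apply Finset.sum_le_sum
          intro j hj
          exact mul_le_mul_of_nonneg_left (key j hj) (by positivity)
      _ ≤ ((Finset.range (m+1)).sum
        (fun j => ((m.choose j : ℕ) : ℝ) * (ε ^ j * (1-ε) ^ (m - j)))) := by
          apply Finset.sum_le_sum_of_subset_of_nonneg (Finset.filter_subset _ _)
          intro j hj _
          positivity
      _ = (ε + (1-ε)) ^ m := by
          rw [add_pow]
          apply Finset.sum_congr rfl
          intro j hj; ring
      _ = 1 := by norm_num
  rw [← Finset.sum_mul] at hsum
  have h2 : (0:ℝ) < (2:ℝ) ^ (-(binEnt ε * (m:ℝ))) := Real.rpow_pos_of_pos two_pos _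
  have heq : (2:ℝ) ^ (binEnt ε * (m:ℝ)) = ((2:ℝ) ^ (-(binEnt ε * (m:ℝ))))⁻¹ := by
    rw [← Real.rpow_neg (by norm_num : (0:ℝ) ≤ 2), neg_neg]
  rw [heq]
  have h3 := mul_le_mul_of_nonneg_right hsum (inv_nonneg.mpr h2.le)
  rw [one_mul, mul_assoc, mul_inv_cancel₀ h2.ne', mul_one] at h3
  exact h3

lemma exists_hard_set (ε : ℝ) (hε0 : 0 < ε) (hε1 : ε ≤ 1/2) (m b : ℕ)
    (hb : (b:ℝ) < (1 - binEnt ε) * m) (s : Fin (2^b) → ℕ → Bool) :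
    ∃ T : Finset ℕ, T ⊆ Finset.range m ∧ ∀ a : Fin (2^b),
      ε * m ≤ (((Finset.range m).filter (fun i => s a i ≠ decide (i ∈ T))).card : ℝ) := by
  by_contra hcon
  push_neg at hcon
  set err : Fin (2^b) → Finset ℕ → Finset ℕ :=
    fun a T => (Finset.range m).filter (fun i => s a i ≠ decide (i ∈ T)) with herr
  set Ball : Fin (2^b) → Finset (Finset ℕ) :=
    fun a => ((Finset.range m).powerset).filter (fun T => ((err a T).card : ℝ) < ε * m)
    with hBall
  -- covering
  have hcover : (Finset.range m).powerset ⊆ Finset.univ.biUnion Ball := by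
    intro T hT
    rw [Finset.mem_powerset] at hT
    obtain ⟨a, ha⟩ := hcon T hT
    exact Finset.mem_biUnion.mpr ⟨a, Finset.mem_univ a,
      Finset.mem_filter.mpr ⟨Finset.mem_powerset.mpr hT, ha⟩⟩
  -- injectivity of err a on subsets of range m
  have hinj : ∀ a : Fin (2^b), ∀ T₁ ∈ Ball a, ∀ T₂ ∈ Ball a,
      err a T₁ = err a T₂ → T₁ = T₂ := by
    intro a T₁ h1 T₂ h2 heq
    have hT1 : T₁ ⊆ Finset.range m := Finset.mem_powerset.mp (Finset.mem_filter.mp h1).1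
    have hT2 : T₂ ⊆ Finset.range m := Finset.mem_powerset.mp (Finset.mem_filter.mp h2).1
    ext i
    by_cases hi : i ∈ Finset.range m
    · have h := Finset.ext_iff.mp heq i
      simp only [herr, Finset.mem_filter, hi, true_and, ne_eq] at h
      constructor <;> intro hmem <;> by_contra hno <;>
        simp only [hmem, hno, decide_eq_true_eq, decide_eq_false_iff_not] at h <;>
        cases hsa : s a i <;> simp [hsa] at h
    · constructor <;> intro hmem
      · exact absurd (hT1 hmem) hi
      · exact absurd (hT2 hmem) hi
  -- ball size
  have hball : ∀ a : Fin (2^b), ((Ball a).card : ℝ) ≤ (2:ℝ) ^ (binEnt ε * m) := by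
    intro a
    have hsub : ∀ T ∈ Ball a, err a T ∈
        ((Finset.range (m+1)).filter (fun j : ℕ => (j:ℝ) ≤ ε * m)).biUnion
          (fun j => Finset.powersetCard j (Finset.range m)) := by
      intro T hT
      have hc : ((err a T).card : ℝ) < ε * m := (Finset.mem_filter.mp hT).2
      have hsubr : err a T ⊆ Finset.range m := Finset.filter_subset _ _
      have hcm : (err a T).card ≤ m := by
        simpa using Finset.card_le_card hsubr
      refine Finset.mem_biUnion.mpr ⟨(err a T).card, ?_, ?_⟩
      · exact Finset.mem_filter.mpr ⟨Finset.mem_range.mpr (Nat.lt_succ_of_le hcm), hc.le⟩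
      · exact Finset.mem_powersetCard.mpr ⟨hsubr, rfl⟩
    have hcard : (Ball a).card ≤
        (((Finset.range (m+1)).filter (fun j : ℕ => (j:ℝ) ≤ ε * m)).biUnion
          (fun j => Finset.powersetCard j (Finset.range m))).card :=
      Finset.card_le_card_of_injOn (err a) hsub (hinj a)
    have hbi : (((Finset.range (m+1)).filter (fun j : ℕ => (j:ℝ) ≤ ε * m)).biUnion
          (fun j => Finset.powersetCard j (Finset.range m))).card ≤
        ((Finset.range (m+1)).filter (fun j : ℕ => (j:ℝ) ≤ ε * m)).sum
          (fun j => m.choose j) := by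
      refine le_trans (Finset.card_biUnion_le) ?_
      apply Finset.sum_le_sum
      intro j _
      simp [Finset.card_powersetCard]
    calc ((Ball a).card : ℝ) ≤
        (((Finset.range (m+1)).filter (fun j : ℕ => (j:ℝ) ≤ ε * m)).sum
          (fun j => m.choose j) : ℕ) := by exact_mod_cast le_trans hcard hbi
      _ = ((Finset.range (m+1)).filter (fun j : ℕ => (j:ℝ) ≤ ε * m)).sum
          (fun j => ((m.choose j : ℕ) : ℝ)) := by push_cast; ring
      _ ≤ (2:ℝ) ^ (binEnt ε * m) := sum_choose_le ε hε0 hε1 m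
  -- counting contradiction
  have hcount : ((2:ℝ) ^ m) ≤ (2:ℝ) ^ b * (2:ℝ) ^ (binEnt ε * m) := by
    have h1 : (2:ℕ) ^ m = ((Finset.range m).powerset).card := by
      simp [Finset.card_powerset]
    have h2 : ((Finset.range m).powerset).card ≤ (Finset.univ.biUnion Ball).card :=
      Finset.card_le_card hcover
    have h3 : (Finset.univ.biUnion Ball).card ≤ ∑ a : Fin (2^b), (Ball a).card :=
      Finset.card_biUnion_le
    have h4 : ((∑ a : Fin (2^b), (Ball a).card : ℕ) : ℝ) ≤
        (2:ℝ) ^ b * (2:ℝ) ^ (binEnt ε * m) := by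
      push_cast
      calc (∑ a : Fin (2^b), ((Ball a).card : ℝ)) ≤
          ∑ _a : Fin (2^b), (2:ℝ) ^ (binEnt ε * m) := Finset.sum_le_sum (fun a _ => hball a)
        _ = (2:ℝ) ^ b * (2:ℝ) ^ (binEnt ε * m) := by
            simp [Finset.sum_const, mul_comm]
    have : ((2:ℕ)^m : ℝ) ≤ (2:ℝ) ^ b * (2:ℝ) ^ (binEnt ε * m) := by
      refine le_trans ?_ h4
      exact_mod_cast h1 ▸ le_trans h2 h3
    simpa using this
  -- but 2^b * 2^(Hm) < 2^m
  have hlt : (2:ℝ) ^ b * (2:ℝ) ^ (binEnt ε * m) < (2:ℝ) ^ m := by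
    have e1 : (2:ℝ) ^ b = (2:ℝ) ^ ((b:ℕ):ℝ) := (Real.rpow_natCast 2 b).symm
    have e2 : (2:ℝ) ^ m = (2:ℝ) ^ ((m:ℕ):ℝ) := (Real.rpow_natCast 2 m).symm
    rw [e1, e2, ← Real.rpow_add two_pos]
    exact Real.rpow_lt_rpow_of_exponent_lt (by norm_num) (by nlinarith)
  linarith

def pmx (m i : ℕ) : ℚ := (i+1) / (2*m+2)

lemma pmx_pos (m i : ℕ) : 0 < pmx m i := by
  unfold pmx; positivity

lemma pmx_lt_half (m i : ℕ) (h : i < m) : pmx m i < 1/2 := by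
  unfold pmx
  rw [div_lt_div_iff₀ (by positivity) (by norm_num)]
  have : (i:ℚ) + 1 ≤ m := by exact_mod_cast h
  linarith

lemma pmx_inj (m : ℕ) : Function.Injective (pmx m) := by
  intro i j h
  unfold pmx at h
  have h2 : (0:ℚ) < 2*m+2 := by positivity
  field_simp at h
  exact_mod_cast (by linarith : (i:ℚ) = j)


/-- For Pair Matching, no deterministic online algorithm reading fewer than
`(1 − H(ε))n/2` advice bits can make fewer than `εn` mistakes, for any
`ε ∈ (0, 1/2]` and large enough `n`: for all sufficiently large `m`, if
`b < (1 − H(ε))·m`, there is an input of length `N ≤ 2m` of pairwise distinct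
rationals in `[0,1]` on which, for every advice value, the algorithm makes at
least `εm` (hence at least `εN/2`) mistakes. -/
theorem pm_online_advice_lower_bound
    (ε : ℝ) (hε0 : 0 < ε) (hε1 : ε ≤ 1 / 2) (b : ℕ)
    (A : Fin (2 ^ b) → List ℚ → ℚ → Bool) :
    ∃ M : ℕ, ∀ m : ℕ, M ≤ m →
      (b : ℝ) < (1 - binEnt ε) * (m : ℝ) →
      ∃ l : List ℚ,
        l.Nodup ∧ (∀ x ∈ l, 0 ≤ x ∧ x ≤ 1) ∧ l.length ≤ 2 * m ∧
        ∀ a : Fin (2 ^ b),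
          ε * (m : ℝ) ≤
            ((Finset.univ.filter (fun i : Fin l.length =>
              A a (l.take (i : ℕ)) (l.get i) ≠ pmCorrect l i)).card : ℝ) := by
  refine ⟨0, fun m _ hb => ?_⟩
  set x : ℕ → ℚ := pmx m with hx
  obtain ⟨T, hTsub, hT⟩ := exists_hard_set ε hε0 hε1 m b hb
    (fun a i => A a ((List.range i).map x) (x i))
  set L1 : List ℚ := (List.range m).map x with hL1
  set L2 : List ℚ := (T.sort (·≤·)).map (fun i => 1 - x i) with hL2
  have hL1len : L1.length = m := by simp [hL1]
  have hL2len : L2.length = T.card := by simp [hL2]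
  have hlen : (L1 ++ L2).length = m + T.card := by simp [hL1, hL2]
  have hcardT : T.card ≤ m := by simpa using Finset.card_le_card hTsub
  have hmemT : ∀ t ∈ T.sort (·≤·), t < m :=
    fun t ht => Finset.mem_range.mp (hTsub ((Finset.mem_sort _).mp ht))
  -- getElem lemmas
  have hget1 : ∀ (i : ℕ) (hi : i < m) (h : i < (L1++L2).length), (L1++L2)[i] = x i := by
    intro i hi h
    rw [List.getElem_append_left (by omega : i < L1.length)]
    simp [hL1]
  have hget2 : ∀ (r : ℕ) (hr : r < T.card) (h : m + r < (L1++L2).length),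
      (L1++L2)[m+r] = 1 - x ((T.sort (·≤·))[r]'(by rw [Finset.length_sort]; exact hr)) := by
    intro r hr h
    rw [List.getElem_append_right (by omega : L1.length ≤ m + r)]
    simp [hL2, show m + r - L1.length = r by omega]
  -- pmCorrect on first-phase positions
  have hcor : ∀ (i : ℕ) (hi : i < m) (h : i < (L1++L2).length),
      pmCorrect (L1++L2) ⟨i, h⟩ = decide (i ∈ T) := by
    intro i hi h
    unfold pmCorrect
    rw [decide_eq_decide]
    constructor
    · rintro ⟨j, hne, hsum⟩
      rw [List.get_eq_getElem, List.get_eq_getElem] at hsum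
      simp only at hsum
      rw [hget1 i hi h] at hsum
      by_cases hj : (j:ℕ) < m
      · rw [hget1 (j:ℕ) hj j.isLt] at hsum
        have h1 := pmx_lt_half m i hi
        have h2 := pmx_lt_half m (j:ℕ) hj
        simp only [hx] at hsum
        linarith
      · have hjlen : (j:ℕ) < m + T.card := by omega
        have hr : (j:ℕ) - m < T.card := by omega
        have hj2 : (j:ℕ) = m + ((j:ℕ) - m) := by omega
        rw [show ((L1++L2)[(j:ℕ)]'j.isLt) = (L1++L2)[m + ((j:ℕ) - m)]'(by omega) by
              congr 1,
            hget2 _ hr] at hsum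
        have hxeq : x i = x ((T.sort (·≤·))[(j:ℕ) - m]'(by rw [Finset.length_sort]; exact hr)) := by
          linarith
        have := pmx_inj m hxeq
        rw [this]
        exact (Finset.mem_sort (α := ℕ) (·≤·)).mp (List.getElem_mem _)
    · intro hiT
      obtain ⟨r, hr, hrt⟩ := List.getElem_of_mem ((Finset.mem_sort (α := ℕ) (·≤·)).mpr hiT)
      have hrT : r < T.card := by rwa [Finset.length_sort] at hr
      refine ⟨⟨m + r, by omega⟩, ?_, ?_⟩
      · exact Fin.ne_of_val_ne (by simp; omega)
      · rw [List.get_eq_getElem, List.get_eq_getElem]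
        simp only
        rw [hget1 i hi h, hget2 r hrT (by omega)]
        rw [show ((T.sort (·≤·))[r]'(by rw [Finset.length_sort]; exact hrT)) = i from hrt]
        ring
  -- take lemma
  have htake : ∀ (i : ℕ), i ≤ m → (L1++L2).take i = (List.range i).map x := by
    intro i hi
    rw [List.take_append_of_le_length (by omega : i ≤ L1.length), hL1,
      ← List.map_take, List.take_range, min_eq_left hi]
  refine ⟨L1 ++ L2, ?_, ?_, ?_, ?_⟩
  · -- Nodup
    refine List.Nodup.append ?_ ?_ ?_
    · exact List.nodup_range.map (pmx_inj m)
    · refine (Finset.sort_nodup _ _).map ?_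
      intro i j h
      simp only at h
      exact pmx_inj m (by linarith)
    · intro q hq1 hq2
      simp only [hL1, List.mem_map, List.mem_range] at hq1
      simp only [hL2, List.mem_map] at hq2
      obtain ⟨i, him, hiq⟩ := hq1
      obtain ⟨t, htm, htq⟩ := hq2
      have h1 := pmx_lt_half m i him
      have h2 := pmx_lt_half m t (hmemT t htm)
      rw [← hiq] at htq
      simp only [hx] at htq
      linarith
  · -- bounds
    intro q hq
    rcases List.mem_append.mp hq with h | h
    · simp only [hL1, List.mem_map, List.mem_range] at h
      obtain ⟨i, him, hiq⟩ := h
      have h1 := pmx_pos m i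
      have h2 := pmx_lt_half m i him
      subst hiq
      exact ⟨h1.le, by linarith⟩
    · simp only [hL2, List.mem_map] at h
      obtain ⟨t, htm, htq⟩ := h
      have h1 := pmx_pos m t
      have h2 := pmx_lt_half m t (hmemT t htm)
      subst htq
      exact ⟨by linarith, by linarith⟩
  · -- length
    omega
  · -- mistakes
    intro a
    refine le_trans (hT a) ?_
    rcases Nat.eq_zero_or_pos m with hm0 | hmpos
    · subst hm0
      simp
    have hpos : 0 < (L1++L2).length := by omega
    have hcard : ((Finset.range m).filter
        (fun i => A a ((List.range i).map x) (x i) ≠ decide (i ∈ T))).card ≤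
        (Finset.univ.filter (fun i : Fin (L1 ++ L2).length =>
          A a ((L1 ++ L2).take (i : ℕ)) ((L1 ++ L2).get i) ≠ pmCorrect (L1 ++ L2) i)).card := by
      apply Finset.card_le_card_of_injOn
        (fun i => (⟨i % (L1++L2).length, Nat.mod_lt _ hpos⟩ : Fin (L1++L2).length))
      · intro i hi
        simp only [Finset.mem_coe, Finset.mem_filter, Finset.mem_range] at hi
        obtain ⟨him, hne⟩ := hi
        have hilen : i < (L1++L2).length := by omega
        have hmod : i % (L1++L2).length = i := Nat.mod_eq_of_lt hilen
        simp only [Finset.mem_coe, Finset.mem_filter, Finset.mem_univ, true_and]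
        have hfin : (⟨i % (L1++L2).length, Nat.mod_lt _ hpos⟩ : Fin (L1++L2).length) =
            ⟨i, hilen⟩ := Fin.ext hmod
        simp only [hfin]
        simp only [hmod]
        rw [List.get_eq_getElem]
        simp only
        rw [hget1 i him hilen, htake i him.le, hcor i him hilen]
        exact hne
      · intro i hi j hj hij
        simp only [Finset.coe_filter, Set.mem_setOf_eq, Finset.mem_range] at hi hj
        have h1 : i % (L1++L2).length = j % (L1++L2).length := by
          simpa [Fin.ext_iff] using hij
        rwa [Nat.mod_eq_of_lt (by omega), Nat.mod_eq_of_lt (by omega)] at h1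
    exact_mod_cast hcard
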